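/- arXiv:1104.3380 — 4 statements merged into one kernel-verified Lean document; each statement's English description precedes it below -/
import Mathlib

section
/- Every 𝒮-linear operator L : 𝒮'(ℝⁿ) → 𝒮'(ℝᵐ) is linear: for all scalars a, b and tempered distributions u, w ∈ 𝒮'(ℝⁿ), L(au + bw) = aL(u) + bL(w). -/
open SchwartzMap

/-- The Schwartz test function space `𝒮(ℝⁿ)`. -/
abbrev TestF (n : ℕ) := SchwartzMap (EuclideanSpace ℝ (Fin n)) ℝ

/-- The space of tempered distributions `𝒮'(ℝⁿ)`. -/
abbrev TempDist (n : ℕ) := TestF n →L[ℝ] ℝ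

/-- An operator `L : 𝒮'(ℝⁿ) → 𝒮'(ℝᵐ)` (a priori just a function) is `𝒮`-linear
if for every `k` and every Schwartz family `v : ℝᵏ → 𝒮'(ℝⁿ)` with associated
operator `vh` (`vh φ p = v p φ`), the image family `L ∘ v` is again a Schwartz
family — i.e. it has an associated operator `Lvh` with `Lvh ψ p = L (v p) ψ` —
and for every coefficient distribution `a ∈ 𝒮'(ℝᵏ)` the superposition identity
`L (a ∘ v̂) = a ∘ (L∘v)̂` holds. -/
def IsSLinear {n m : ℕ} (L : TempDist n → TempDist m) : Prop :=
  ∀ (k : ℕ) (v : EuclideanSpace ℝ (Fin k) → TempDist n)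
    (vh : TestF n →L[ℝ] TestF k), (∀ (φ : TestF n) p, vh φ p = v p φ) →
    ∃ Lvh : TestF m →L[ℝ] TestF k,
      (∀ (ψ : TestF m) p, Lvh ψ p = L (v p) ψ) ∧
      ∀ a : TempDist k, L (a.comp vh) = a.comp Lvh

/-- Every 𝒮-linear operator is linear. -/
theorem isSLinear_linear {n m : ℕ} (L : TempDist n → TempDist m)
    (hL : IsSLinear L) (a b : ℝ) (u w : TempDist n) :
    L (a • u + b • w) = a • L u + b • L w := by
  obtain ⟨Lvh, -, h⟩ := hL n (fun p => (BoundedContinuousFunction.evalCLM ℝ p).comp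
      (SchwartzMap.toBoundedContinuousFunctionCLM ℝ _ ℝ))
    (ContinuousLinearMap.id ℝ _) (fun φ p => rfl)
  have key : ∀ x : TempDist n, L x = x.comp Lvh := fun x => by
    simpa using h x
  rw [key, key u, key w]
  ext ψ
  simp
end

section
/- Characterization of 𝒮-linearity (necessity): if L : 𝒮'(ℝⁿ) → 𝒮'(ℝᵐ) is an 𝒮-linear operator, then L is the transpose of the continuous linear operator associated with the Schwartz family L∘δ (δ the Dirac family of 𝒮'(ℝⁿ)); i.e., L(u) = u ∘ (L∘δ)̂ for every u ∈ 𝒮'(ℝⁿ). In particular, there exists a continuous linear B : 𝒮(ℝᵐ) → 𝒮(ℝⁿ) with L = ᵗB. -/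
open SchwartzMap

/-- The Dirac delta `f ↦ f x` on Schwartz space (as in the older Mathlib's `SchwartzMap.delta`,
since removed). -/
noncomputable def SchwartzMap.delta (𝕜 : Type*) (F : Type*) {E : Type*}
    [NormedAddCommGroup E] [NormedSpace ℝ E] [NormedAddCommGroup F] [NormedSpace ℝ F]
    [RCLike 𝕜] [NormedSpace 𝕜 F] [SMulCommClass ℝ 𝕜 F] (x : E) : 𝓢(E, F) →L[𝕜] F :=
  (BoundedContinuousFunction.evalCLM 𝕜 x).comp (toBoundedContinuousFunctionCLM 𝕜 E F)

/-- Characterization of 𝒮-linearity (necessity): an 𝒮-linear operator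
`L : 𝒮'(ℝⁿ) → 𝒮'(ℝᵐ)` is the transpose of the continuous linear operator
associated with the Schwartz family `L ∘ δ`, where `δ` is the Dirac family:
there exists a continuous linear `B : 𝒮(ℝᵐ) → 𝒮(ℝⁿ)` with
`B ψ x = L(δₓ)(ψ)` and `L(u) = u ∘ B` for all `u`. -/
theorem isSLinear_necessity {n m : ℕ} (L : TempDist n → TempDist m)
    (hL : IsSLinear L) :
    ∃ B : TestF m →L[ℝ] TestF n,
      (∀ (ψ : TestF m) (x : EuclideanSpace ℝ (Fin n)),
        B ψ x = L (SchwartzMap.delta ℝ ℝ x) ψ) ∧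
      ∀ u : TempDist n, L u = u.comp B := by
  obtain ⟨B, hB, hB2⟩ := hL n (fun x => SchwartzMap.delta ℝ ℝ x)
    (ContinuousLinearMap.id ℝ _) (fun φ p => rfl)
  exact ⟨B, hB, fun u => by simpa using hB2 u⟩
end

section
/- Full characterization of 𝒮-linearity: for an operator L : 𝒮'(ℝⁿ) → 𝒮'(ℝᵐ), the following are equivalent: (1) L is 𝒮-linear; (2) there exists a continuous linear B : 𝒮(ℝᵐ) → 𝒮(ℝⁿ) with L = ᵗB (i.e., L(u) = u ∘ B for all u). -/
open SchwartzMap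

/-- Full characterization of 𝒮-linearity: an operator `L : 𝒮'(ℝⁿ) → 𝒮'(ℝᵐ)` is
𝒮-linear if and only if it is the transpose `ᵗB : u ↦ u ∘ B` of some continuous
linear operator `B : 𝒮(ℝᵐ) → 𝒮(ℝⁿ)`. -/
theorem isSLinear_iff_transpose {n m : ℕ} (L : TempDist n → TempDist m) :
    IsSLinear L ↔ ∃ B : TestF m →L[ℝ] TestF n, ∀ u : TempDist n, L u = u.comp B := by
  constructor
  · intro h
    obtain ⟨Lvh, -, h2⟩ := h n (fun p => (BoundedContinuousFunction.evalCLM ℝ p).comp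
      (SchwartzMap.toBoundedContinuousFunctionCLM ℝ (EuclideanSpace ℝ (Fin n)) ℝ))
      (ContinuousLinearMap.id ℝ (TestF n)) (fun φ p => rfl)
    exact ⟨Lvh, fun u => by simpa using h2 u⟩
  · rintro ⟨B, hB⟩ k v vh hvh
    refine ⟨vh.comp B, fun ψ p => ?_, fun a => ?_⟩
    · rw [hB]; exact hvh (B ψ) p
    · rw [hB]; rfl
end

section
/- An 𝒮-linear operator L : 𝒮'(ℝⁿ) → 𝒮'(ℝᵐ) is weak* continuous: if a net (or filter) uᵢ → u in 𝒮'(ℝⁿ) with the weak* topology (i.e., uᵢ(φ) → u(φ) for every φ ∈ 𝒮(ℝⁿ)), then L(uᵢ)(ψ) → L(u)(ψ) for every ψ ∈ 𝒮(ℝᵐ). -/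
open SchwartzMap

/-- An 𝒮-linear operator is weak* continuous: if `uᵢ → u` in the weak* topology
of `𝒮'(ℝⁿ)` (pointwise on test functions) along a filter, then
`L(uᵢ)(ψ) → L(u)(ψ)` for every `ψ ∈ 𝒮(ℝᵐ)`. -/
theorem isSLinear_weakStar_continuous {n m : ℕ} (L : TempDist n → TempDist m)
    (hL : IsSLinear L) {ι : Type*} (F : Filter ι)
    (u : ι → TempDist n) (u₀ : TempDist n)
    (hconv : ∀ φ : TestF n, Filter.Tendsto (fun i => u i φ) F (nhds (u₀ φ))) :
    ∀ ψ : TestF m, Filter.Tendsto (fun i => L (u i) ψ) F (nhds (L u₀ ψ)) := by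
  obtain ⟨B, hB, hLB⟩ := hL n (fun p => (BoundedContinuousFunction.evalCLM ℝ p).comp (toBoundedContinuousFunctionCLM ℝ _ ℝ)) (ContinuousLinearMap.id ℝ _)
    (fun φ p => rfl)
  intro ψ
  have key : ∀ w : TempDist n, L w ψ = w (B ψ) := by
    intro w
    have := hLB w
    rw [ContinuousLinearMap.comp_id] at this
    rw [this]; rfl
  simp only [key]
  exact hconv (B ψ)
end
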